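/- FWER control of the Šidák stepdown procedure under independence: let ρ_1,...,ρ_s be independent p-values with ρ_i stochastically no smaller than uniform on [0,1] under each true null H_0^i. Order them as ρ_(1) ≤ ... ≤ ρ_(s) and reject H_0^{(1)},...,H_0^{(r)} where r is the largest index such that ρ_(j) < 1 − (1−α)^{1/(s−j+1)} for all j ≤ r. Then the probability of rejecting at least one true null hypothesis is at most α. -/

import Mathlib

open Finset
open scoped BigOperators Classical

noncomputable section

/-- The p-values sorted in nondecreasing order, as a list. -/
def sortedP (s : ℕ) (ρ : Fin s → ℝ) : List ℝ :=
  Multiset.sort (↑(List.ofFn ρ) : Multiset ℝ) (· ≤ ·)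

/-- The Šidák stepdown critical value `α_j = 1 − (1−α)^{1/(s−j+1)}` (for the j-th smallest
p-value, `1 ≤ j ≤ s`). -/
def sidakCrit (α : ℝ) (s j : ℕ) : ℝ :=
  1 - (1 - α) ^ ((1 : ℝ) / ((s : ℝ) - (j : ℝ) + 1))

/-- The number `r` of rejections of the stepdown procedure: the largest `r ≤ s` such that
`ρ_(j) < α_j` for all `j ≤ r` (0-indexed: `sorted[j] < α_{j+1}` for all `j < r`). -/
def numRej (s : ℕ) (α : ℝ) (ρ : Fin s → ℝ) : ℕ :=
  Nat.findGreatest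
    (fun r => ∀ j < r, (sortedP s ρ).getD j 0 < sidakCrit α s (j + 1)) s

/-- Hypothesis `i` is rejected by the stepdown procedure: its p-value is one of the `r`
smallest order statistics, where `r = numRej`. -/
def rejected (s : ℕ) (α : ℝ) (ρ : Fin s → ℝ) (i : Fin s) : Prop :=
  ∃ j < numRej s α ρ, (sortedP s ρ).getD j 0 = ρ i

/-- Codomain family used to express that the true-null p-values are mutually independent
and independent of the (joint vector of the) remaining p-values. -/
def depCod (s : ℕ) (I : Finset (Fin s)) : Option {i : Fin s // i ∈ I} → Type :=
  fun o => Option.rec (Fin s → ℝ) (fun _ => ℝ) o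

instance depCodMS (s : ℕ) (I : Finset (Fin s)) : ∀ o, MeasurableSpace (depCod s I o) :=
  fun o => Option.rec (inferInstance : MeasurableSpace (Fin s → ℝ))
    (fun _ => (inferInstance : MeasurableSpace ℝ)) o

/-- The family of maps: each true-null p-value separately, together with the joint vector of
the non-null p-values (true-null coordinates zeroed out). -/
def depFun {Ω : Type*} (s : ℕ) (I : Finset (Fin s)) (ρ : Fin s → Ω → ℝ) :
    ∀ o : Option {i : Fin s // i ∈ I}, Ω → depCod s I o :=
  fun o => Option.rec (fun ω j => if j ∈ I then 0 else ρ j ω) (fun i ω => ρ i.1 ω) o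

-- AUX
lemma sortedP_length (s : ℕ) (ρ : Fin s → ℝ) : (sortedP s ρ).length = s := by
  simp [sortedP]

lemma sortedP_perm (s : ℕ) (ρ : Fin s → ℝ) : (sortedP s ρ).Perm (List.ofFn ρ) := by
  rw [← Multiset.coe_eq_coe]
  exact Multiset.sort_eq _ _

lemma sortedP_sorted (s : ℕ) (ρ : Fin s → ℝ) : (sortedP s ρ).Pairwise (· ≤ ·) :=
  Multiset.pairwise_sort _ _

lemma count_le (s : ℕ) (ρ : Fin s → ℝ) (m : ℕ) (hm : m < s) :
    m + 1 ≤ (Finset.univ.filter (fun k => ρ k ≤ (sortedP s ρ).getD m 0)).card := by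
  set v := (sortedP s ρ).getD m 0 with hv
  have hcard : (Finset.univ.filter (fun k => ρ k ≤ v)).card
      = (List.ofFn ρ).countP (fun x => decide (x ≤ v)) := by
    rw [List.ofFn_eq_map, List.countP_map, Fin.univ_def]
    show Multiset.card (Multiset.filter _ (↑(List.finRange s) : Multiset (Fin s))) = _
    rw [Multiset.filter_coe, Multiset.coe_card, ← List.countP_eq_length_filter]
    congr 1
  rw [hcard, ← (sortedP_perm s ρ).countP_eq]
  set L := sortedP s ρ with hL
  have hlen : L.length = s := sortedP_length s ρ
  have hmL : m < L.length := by omega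
  have htake : ∀ x ∈ L.take (m + 1), (fun x => decide (x ≤ v)) x = true := by
    intro x hx
    rw [List.mem_take_iff_getElem] at hx
    obtain ⟨i, hi, rfl⟩ := hx
    have hi' : i < L.length := lt_of_lt_of_le (lt_min_iff.1 hi).2 (le_refl _)
    have him : i ≤ m := by omega
    have := (sortedP_sorted s ρ).rel_get_of_le (a := ⟨i, hi'⟩) (b := ⟨m, hmL⟩) (by exact him)
    simp only [decide_eq_true_eq]
    rw [hv, List.getD_eq_getElem L 0 hmL]
    exact this
  have h1 : (L.take (m+1)).countP (fun x => decide (x ≤ v)) = (L.take (m+1)).length :=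
    List.countP_eq_length.2 htake
  have h2 : (L.take (m+1)).length = m + 1 := by
    rw [List.length_take]; omega
  calc m + 1 = (L.take (m+1)).countP (fun x => decide (x ≤ v)) := by rw [h1, h2]
    _ ≤ L.countP (fun x => decide (x ≤ v)) := by
        conv_rhs => rw [← List.take_append_drop (m+1) L]
        rw [List.countP_append]; omega

lemma sidakCrit_mono {α : ℝ} (hα : 0 < α) (hα1 : α < 1) {s j j' : ℕ} (hjj' : j ≤ j')
    (hj' : j' ≤ s) : sidakCrit α s j ≤ sidakCrit α s j' := by
  unfold sidakCrit
  have h1 : (0:ℝ) < 1 - α := by linarith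
  apply sub_le_sub_left
  apply Real.rpow_le_rpow_of_exponent_ge h1 (by linarith)
  have hc1 : (j':ℝ) ≤ s := Nat.cast_le.2 hj'
  have hc2 : (j:ℝ) ≤ j' := Nat.cast_le.2 hjj'
  have d1 : (0:ℝ) < (s:ℝ) - j' + 1 := by linarith
  apply one_div_le_one_div_of_le d1
  linarith

lemma sidak_key (s : ℕ) (α : ℝ) (hα : 0 < α) (hα1 : α < 1) (p : Fin s → ℝ)
    (I : Finset (Fin s)) (hne : ∃ i ∈ I, rejected s α p i) :
    ∃ k ∈ I, p k < sidakCrit α s (s - I.card + 1) := by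
  obtain ⟨i, hi, j, hjr, hje⟩ := hne
  set t := I.card with ht
  have ht1 : 1 ≤ t := Finset.card_pos.2 ⟨i, hi⟩
  have hts : t ≤ s := by simpa using I.card_le_univ
  have hrs : numRej s α p ≤ s := Nat.findGreatest_le s
  have hP : ∀ j' < numRej s α p, (sortedP s p).getD j' 0 < sidakCrit α s (j'+1) := by
    have := Nat.findGreatest_spec
      (P := fun r => ∀ j < r, (sortedP s p).getD j 0 < sidakCrit α s (j + 1))
      (Nat.zero_le s) (fun j hj => absurd hj (Nat.not_lt_zero j))
    exact this
  set m := min j (s - t) with hm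
  have hmj : m ≤ j := min_le_left _ _
  have hmst : m ≤ s - t := min_le_right _ _
  have hm_r : m < numRej s α p := lt_of_le_of_lt hmj hjr
  have hms : m < s := lt_of_lt_of_le hm_r hrs
  have h1 : (sortedP s p).getD m 0 < sidakCrit α s (m+1) := hP m hm_r
  have h2 : sidakCrit α s (m+1) ≤ sidakCrit α s (s - t + 1) :=
    sidakCrit_mono hα hα1 (by omega) (by omega)
  by_cases hc : j ≤ s - t
  · have hmj' : m = j := min_eq_left hc
    refine ⟨i, hi, ?_⟩
    rw [← hje, ← hmj']
    exact lt_of_lt_of_le h1 h2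
  · have hcount := count_le s p m hms
    set F := Finset.univ.filter (fun k => p k ≤ (sortedP s p).getD m 0) with hF
    have hex : ∃ k ∈ F, k ∈ I := by
      by_contra h
      push_neg at h
      have hsub : F ⊆ Finset.univ \ I := fun k hk =>
        Finset.mem_sdiff.2 ⟨Finset.mem_univ k, h k hk⟩
      have hcards := Finset.card_le_card hsub
      rw [Finset.card_sdiff_of_subset (Finset.subset_univ I)] at hcards
      simp only [Finset.card_univ, Fintype.card_fin] at hcards
      omega
    obtain ⟨k, hkF, hkI⟩ := hex
    have hk : p k ≤ (sortedP s p).getD m 0 := (Finset.mem_filter.1 hkF).2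
    exact ⟨k, hkI, lt_of_le_of_lt hk (lt_of_lt_of_le h1 h2)⟩
-- ENDAUX

/-- FWER control of the Šidák stepdown procedure: if the p-values of true
null hypotheses (indexed by `I`) are valid (stochastically no smaller than uniform), mutually
independent, and independent of the remaining p-values, then the probability of rejecting at
least one true null is at most α. -/
theorem sidak_stepdown_fwer {Ω : Type*} [MeasurableSpace Ω]
    (μ : MeasureTheory.Measure Ω) [MeasureTheory.IsProbabilityMeasure μ]
    (s : ℕ) (α : ℝ) (hα : 0 < α) (hα1 : α < 1)
    (ρ : Fin s → Ω → ℝ) (hmeas : ∀ i, Measurable (ρ i))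
    (I : Finset (Fin s))
    (hvalid : ∀ i ∈ I, ∀ u : ℝ, 0 ≤ u → u ≤ 1 →
      μ {ω | ρ i ω ≤ u} ≤ ENNReal.ofReal u)
    (hindep : ProbabilityTheory.iIndepFun (m := depCodMS s I) (depFun s I ρ) μ) :
    μ {ω | ∃ i ∈ I, rejected s α (fun i' => ρ i' ω) i} ≤ ENNReal.ofReal α := by
  classical
  rcases I.eq_empty_or_nonempty with hI | hI
  · have hempty : {ω | ∃ i ∈ I, rejected s α (fun i' => ρ i' ω) i} = ∅ := by
      ext ω; simp [hI]
    rw [hempty]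
    simp
  set c := sidakCrit α s (s - I.card + 1) with hc
  have ht1 : 1 ≤ I.card := Finset.card_pos.2 hI
  have hts : I.card ≤ s := by simpa using I.card_le_univ
  have htR : (0:ℝ) < I.card := by exact_mod_cast ht1
  have hβ : (0:ℝ) < 1 - α := by linarith
  set X := (1 - α) ^ ((1:ℝ) / (I.card : ℝ)) with hX
  have hc_eq : c = 1 - X := by
    rw [hc, hX]
    unfold sidakCrit
    have h1 : ((s - I.card + 1 : ℕ) : ℝ) = (s:ℝ) - (I.card:ℝ) + 1 := by
      rw [Nat.cast_add, Nat.cast_sub hts, Nat.cast_one]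
    rw [h1]
    have h2 : (s:ℝ) - ((s:ℝ) - (I.card:ℝ) + 1) + 1 = (I.card:ℝ) := by ring
    rw [h2]
  have hX1 : X ≤ 1 := Real.rpow_le_one hβ.le (by linarith) (by positivity)
  have hX0 : 0 < X := Real.rpow_pos_of_pos hβ _
  have hc0 : 0 ≤ c := by rw [hc_eq]; linarith
  have hc1 : c ≤ 1 := by rw [hc_eq]; linarith
  have hsub : {ω | ∃ i ∈ I, rejected s α (fun i' => ρ i' ω) i}
      ⊆ {ω | ∃ k ∈ I, ρ k ω < c} := by
    intro ω hω
    obtain ⟨k, hk, hl⟩ := sidak_key s α hα hα1 (fun i' => ρ i' ω) I hω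
    exact ⟨k, hk, hl⟩
  refine le_trans (MeasureTheory.measure_mono hsub) ?_
  have hset : {ω | ∃ k ∈ I, ρ k ω < c} = (⋂ k ∈ I, {ω | c ≤ ρ k ω})ᶜ := by
    ext ω
    simp [not_le]
  rw [hset]
  have hmeasA : MeasurableSet (⋂ k ∈ I, {ω | c ≤ ρ k ω}) :=
    MeasurableSet.biInter I.countable_toSet
      (fun k _ => measurableSet_le measurable_const (hmeas k))
  rw [MeasureTheory.prob_compl_eq_one_sub hmeasA]
  -- independence: the intersection factorizes
  have hprod : μ (⋂ k ∈ I, {ω | c ≤ ρ k ω}) = ∏ k ∈ I, μ {ω | c ≤ ρ k ω} := by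
    set S : Finset (Option {i : Fin s // i ∈ I}) := I.attach.image (fun x => some x) with hS
    set T : ∀ o : Option {i : Fin s // i ∈ I}, Set (depCod s I o) :=
      fun o => Option.rec (motive := fun o => Set (depCod s I o))
        (Set.univ : Set (Fin s → ℝ)) (fun _ => (Set.Ici c : Set ℝ)) o with hT
    have hmeasT : ∀ o ∈ S, @MeasurableSet _ (depCodMS s I o) (T o) := by
      intro o _
      rcases o with _ | x
      · exact MeasurableSet.univ
      · exact (measurableSet_Ici : MeasurableSet (Set.Ici c))
    have hmain := hindep.measure_inter_preimage_eq_mul S (sets := T) hmeasT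
    have hL : (⋂ o ∈ S, depFun s I ρ o ⁻¹' T o) = ⋂ k ∈ I, {ω | c ≤ ρ k ω} := by
      ext ω
      simp only [Set.mem_iInter, hS, Finset.mem_image, Finset.mem_attach, true_and,
        Set.mem_preimage]
      constructor
      · intro h k hk
        exact h (some ⟨k, hk⟩) ⟨⟨k, hk⟩, rfl⟩
      · rintro h o ⟨x, rfl⟩
        exact h x.1 x.2
    have hR : (∏ o ∈ S, μ (depFun s I ρ o ⁻¹' T o)) = ∏ k ∈ I, μ {ω | c ≤ ρ k ω} := by
      rw [hS, Finset.prod_image (fun a _ b _ h => Option.some_injective _ h)]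
      rw [← Finset.prod_attach I (fun k => μ {ω | c ≤ ρ k ω})]
      rfl
    rw [← hL, ← hR]
    exact hmain
  have heach : ∀ k ∈ I, ENNReal.ofReal (1 - c) ≤ μ {ω | c ≤ ρ k ω} := by
    intro k hk
    have hcompl : {ω | c ≤ ρ k ω} = {ω | ρ k ω < c}ᶜ := by
      ext ω; simp [not_lt]
    rw [hcompl, MeasureTheory.prob_compl_eq_one_sub
      (measurableSet_lt (hmeas k) measurable_const)]
    have hle : μ {ω | ρ k ω < c} ≤ ENNReal.ofReal c :=
      le_trans (MeasureTheory.measure_mono (fun ω (h : ρ k ω < c) => le_of_lt h)) (hvalid k hk c hc0 hc1)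
    calc ENNReal.ofReal (1 - c) = 1 - ENNReal.ofReal c := by
          rw [ENNReal.ofReal_sub 1 hc0, ENNReal.ofReal_one]
      _ ≤ 1 - μ {ω | ρ k ω < c} := tsub_le_tsub_left hle 1
  have hXpow : X ^ I.card = 1 - α := by
    rw [hX, ← Real.rpow_natCast ((1 - α) ^ ((1:ℝ) / (I.card : ℝ))) I.card,
      ← Real.rpow_mul hβ.le, one_div, inv_mul_cancel₀ (ne_of_gt htR), Real.rpow_one]
  have hprodge : ENNReal.ofReal (1 - α) ≤ ∏ k ∈ I, μ {ω | c ≤ ρ k ω} := by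
    have h1c : 1 - c = X := by rw [hc_eq]; ring
    calc ENNReal.ofReal (1 - α) = ENNReal.ofReal ((1 - c) ^ I.card) := by
          rw [h1c, hXpow]
      _ = (ENNReal.ofReal (1 - c)) ^ I.card := ENNReal.ofReal_pow (by linarith) _
      _ = ∏ _k ∈ I, ENNReal.ofReal (1 - c) := (Finset.prod_const _).symm
      _ ≤ ∏ k ∈ I, μ {ω | c ≤ ρ k ω} := Finset.prod_le_prod' heach
  calc 1 - μ (⋂ k ∈ I, {ω | c ≤ ρ k ω}) ≤ 1 - ENNReal.ofReal (1 - α) :=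
        tsub_le_tsub_left (hprod ▸ hprodge) 1
    _ = ENNReal.ofReal α := by
        rw [ENNReal.ofReal_sub 1 hα.le, ENNReal.ofReal_one,
          ENNReal.sub_sub_cancel ENNReal.one_ne_top (ENNReal.ofReal_le_one.2 hα1.le)]
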